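/- For each nonnegative integer i and each integer n, the number of partitions of n into distinct parts whose minimal excludant exceeds i equals the number of partitions of n − i(i+1)/2 into distinct parts all of whose parts are greater than i. -/

import Mathlib

/-- The set of partitions of `n` into distinct parts, encoded as finsets of
positive integers summing to `n`. -/
def Dpart (n : ℕ) : Finset (Finset ℕ) :=
  (Finset.Icc 1 n).powerset.filter (fun S => S.sum id = n)

/-- The minimal excludant: the least positive integer not occurring as a part. -/
noncomputable def pmex (S : Finset ℕ) : ℕ := sInf {m : ℕ | 0 < m ∧ m ∉ S}

/-- `D_i(n)`: the number of distinct-parts partitions of `n` with mex exceeding `i`. -/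
noncomputable def Dcount (i n : ℕ) : ℕ := ((Dpart n).filter (fun S => i < pmex S)).card

/-- The number of distinct-parts partitions with all parts `> i` and sum equal to the
integer `n - i(i+1)/2` (there are none when this integer is negative). -/
def pdGt (n i : ℕ) : ℕ :=
  (((Finset.Icc 1 n).powerset).filter
    (fun S => (∀ x ∈ S, i < x) ∧ ((S.sum id : ℕ) : ℤ) = (n : ℤ) - (i * (i + 1) / 2 : ℕ))).card

lemma sum_Icc_one_eq (i : ℕ) : (Finset.Icc 1 i).sum id = i * (i + 1) / 2 := by
  induction i with
  | zero => simp
  | succ k ih =>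
    have hins : Finset.Icc 1 (k + 1) = insert (k + 1) (Finset.Icc 1 k) := by
      ext x; simp [Finset.mem_Icc]; omega
    rw [hins, Finset.sum_insert (by simp [Finset.mem_Icc])]
    rw [ih]
    obtain ⟨m, hm⟩ := Nat.even_mul_succ_self k
    have hm' : k * (k + 1) = 2 * m := by omega
    have hm2 : (k + 1) * (k + 1 + 1) = 2 * (m + (k + 1)) := by
      have : (k + 1) * (k + 1 + 1) = k * (k + 1) + 2 * (k + 1) := by ring
      omega
    simp only [id]
    rw [hm', hm2, Nat.mul_div_cancel_left _ (by norm_num : 0 < 2),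
      Nat.mul_div_cancel_left _ (by norm_num : 0 < 2)]
    omega

lemma pmex_gt_iff {S : Finset ℕ} {n i : ℕ} (hS : S ⊆ Finset.Icc 1 n) :
    i < pmex S ↔ Finset.Icc 1 i ⊆ S := by
  have hne : {m : ℕ | 0 < m ∧ m ∉ S}.Nonempty := by
    refine ⟨n + 1, by omega, fun h => ?_⟩
    have := hS h
    simp [Finset.mem_Icc] at this
  constructor
  · intro h m hm
    simp only [Finset.mem_Icc] at hm
    by_contra hmS
    have : pmex S ≤ m := Nat.sInf_le ⟨by omega, hmS⟩
    omega
  · intro h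
    have hmem := Nat.sInf_mem hne
    obtain ⟨hpos, hnot⟩ := hmem
    by_contra hcon
    push_neg at hcon
    exact hnot (h (Finset.mem_Icc.mpr ⟨hpos, hcon⟩))

/-- `D_i(n) = p_d(n − i(i+1)/2, i)`. -/
theorem stmt_2 (i n : ℕ) : Dcount i n = pdGt n i := by
  classical
  unfold Dcount pdGt Dpart
  refine Finset.card_nbij' (fun S => S \ Finset.Icc 1 i) (fun T => T ∪ Finset.Icc 1 i)
    ?_ ?_ ?_ ?_
  · intro S hS
    simp only [Finset.mem_coe, Finset.mem_filter, Finset.mem_powerset] at hS ⊢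
    obtain ⟨⟨hsub, hsum⟩, hmex⟩ := hS
    have hIcc : Finset.Icc 1 i ⊆ S := (pmex_gt_iff hsub).mp hmex
    have hsd : (S \ Finset.Icc 1 i).sum id + (Finset.Icc 1 i).sum id = S.sum id :=
      Finset.sum_sdiff hIcc
    refine ⟨(Finset.sdiff_subset).trans hsub, ?_, ?_⟩
    · intro x hx
      simp only [Finset.mem_sdiff, Finset.mem_Icc, not_and, not_le] at hx
      have hx1 : x ∈ Finset.Icc 1 n := hsub hx.1
      simp only [Finset.mem_Icc] at hx1
      have := hx.2 hx1.1
      omega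
    · rw [sum_Icc_one_eq, hsum] at hsd
      omega
  · intro T hT
    simp only [Finset.mem_coe, Finset.mem_filter, Finset.mem_powerset] at hT ⊢
    obtain ⟨hsub, hgt, hsum⟩ := hT
    have hnn : (0 : ℤ) ≤ (T.sum id : ℕ) := by positivity
    have ht : i * (i + 1) / 2 ≤ n := by omega
    have hi_le : i ≤ n := by
      have h2 : i * 2 ≤ i * (i + 1) := by
        rcases Nat.eq_zero_or_pos i with h | h
        · simp [h]
        · exact Nat.mul_le_mul (le_refl i) (by omega)
      have hk : i ≤ i * (i + 1) / 2 := (Nat.le_div_iff_mul_le (by norm_num)).mpr h2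
      exact hk.trans ht
    have hdisj : Disjoint T (Finset.Icc 1 i) := by
      rw [Finset.disjoint_left]
      intro x hx hx2
      simp only [Finset.mem_Icc] at hx2
      exact absurd (hgt x hx) (by omega)
    have hsum' : T.sum id + i * (i + 1) / 2 = n := by omega
    constructor
    · constructor
      · intro x hx
        rcases Finset.mem_union.mp hx with h | h
        · exact hsub h
        · simp only [Finset.mem_Icc] at h ⊢; omega
      · rw [Finset.sum_union hdisj, sum_Icc_one_eq]
        exact hsum'
    · rw [pmex_gt_iff]
      · exact Finset.subset_union_right
      · intro x hx
        rcases Finset.mem_union.mp hx with h | h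
        · exact hsub h
        · simp only [Finset.mem_Icc] at h ⊢; omega
  · intro S hS
    simp only [Finset.mem_coe, Finset.mem_filter, Finset.mem_powerset] at hS
    exact Finset.sdiff_union_of_subset ((pmex_gt_iff hS.1.1).mp hS.2)
  · intro T hT
    simp only [Finset.mem_coe, Finset.mem_filter, Finset.mem_powerset] at hT
    show (T ∪ Finset.Icc 1 i) \ Finset.Icc 1 i = T
    rw [Finset.union_sdiff_right]
    rw [Finset.sdiff_eq_self_iff_disjoint]
    rw [Finset.disjoint_left]
    intro x hx hx2
    simp only [Finset.mem_Icc] at hx2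
    exact absurd (hT.2.1 x hx) (by omega)
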